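/- There exists an absolute constant C > 0 with the following property. Let c₁, c₂ be positive real numbers with c₁ ≤ c₂, let 0 < ε < 1/2, and let n be a nonnegative integer. Let S = { x ∈ ℝ_{≥0}^n : c₁ ≤ x₁ + ⋯ + x_n < c₂ }. Then there exists a finite subset T ⊆ ℝ_{≥0}^n with #T ≤ C^n · ε^{−(n+1)} · (1 + log(c₂/c₁)) such that for every x ∈ S there is some P ∈ T with |x − P|₁ ≤ ε·|P|₁. -/

import Mathlib

open Finset

lemma ratio_pow_le_exp (n M : ℕ) (hM : 0 < M) :
    (((M : ℝ) + n) / M) ^ M ≤ Real.exp n := by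
  have hM' : (0:ℝ) < M := by exact_mod_cast hM
  have h1 : ((M : ℝ) + n) / M = (n : ℝ)/M + 1 := by field_simp; ring
  have h2 : (n:ℝ)/M + 1 ≤ Real.exp ((n:ℝ)/M) := Real.add_one_le_exp _
  calc (((M : ℝ) + n) / M) ^ M ≤ (Real.exp ((n:ℝ)/M)) ^ M := by
        apply pow_le_pow_left₀ (by positivity) (by rw [h1]; exact h2)
    _ = Real.exp ((M:ℝ) * ((n:ℝ)/M)) := (Real.exp_nat_mul _ _).symm
    _ = Real.exp n := by rw [mul_div_cancel₀ _ (ne_of_gt hM')]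

lemma card_simplex_le (n M : ℕ) (hn : 0 < n) (hM : 0 < M) :
    ((((Fintype.piFinset fun _ : Fin n => Finset.range (M+1)).filter
        fun q => ∑ i, q i ≤ M).card : ℝ))
      ≤ (((M:ℝ) + n) / n) ^ n * Real.exp n := by
  classical
  set A := (Fintype.piFinset fun _ : Fin n => Finset.range (M+1)).filter
      (fun q => ∑ i, q i ≤ M) with hA
  set x : ℝ := (M : ℝ) / ((M:ℝ) + n) with hxdef
  have hn' : (0:ℝ) < n := by exact_mod_cast hn
  have hM' : (0:ℝ) < M := by exact_mod_cast hM
  have hMn : (0:ℝ) < (M:ℝ) + n := by positivity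
  have hx0 : 0 < x := by positivity
  have hx1 : x < 1 := by rw [hxdef, div_lt_one hMn]; linarith
  have h1mx : 1 - x = (n:ℝ) / ((M:ℝ)+n) := by rw [hxdef]; field_simp; ring
  have h1mxpos : (0:ℝ) < 1 - x := by linarith
  have key : (A.card : ℝ) * x ^ M ≤ ((1 - x)⁻¹) ^ n := by
    have step1 : (A.card : ℝ) * x ^ M ≤ ∑ q ∈ A, x ^ (∑ i, q i) := by
      have h := Finset.sum_const (b := x ^ M) (s := A)
      rw [nsmul_eq_mul] at h
      rw [← h]
      refine Finset.sum_le_sum fun q hq => ?_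
      exact pow_le_pow_of_le_one hx0.le hx1.le (Finset.mem_filter.mp hq).2
    have step2 : ∑ q ∈ A, x ^ (∑ i, q i)
        ≤ ∑ q ∈ Fintype.piFinset fun _ : Fin n => Finset.range (M+1), x ^ (∑ i, q i) := by
      apply Finset.sum_le_sum_of_subset_of_nonneg (Finset.filter_subset _ _)
      intro q _ _; positivity
    have step3 : ∑ q ∈ Fintype.piFinset fun _ : Fin n => Finset.range (M+1), x ^ (∑ i, q i)
        = (∑ j ∈ Finset.range (M+1), x ^ j) ^ n := by
      calc ∑ q ∈ Fintype.piFinset fun _ : Fin n => Finset.range (M+1), x ^ (∑ i, q i)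
          = ∑ q ∈ Fintype.piFinset fun _ : Fin n => Finset.range (M+1), ∏ i, x ^ (q i) := by
            refine Finset.sum_congr rfl fun q _ => ?_
            rw [Finset.prod_pow_eq_pow_sum]
        _ = ∏ _i : Fin n, ∑ j ∈ Finset.range (M+1), x ^ j :=
            (Finset.prod_univ_sum _ _).symm
        _ = (∑ j ∈ Finset.range (M+1), x ^ j) ^ n := by
            rw [Finset.prod_const, Finset.card_univ, Fintype.card_fin]
    have step4 : (∑ j ∈ Finset.range (M+1), x ^ j) ≤ (1 - x)⁻¹ := by
      have heq : (x ^ (M+1) - 1) / (x - 1) = (1 - x ^ (M+1)) / (1 - x) := by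
        rw [← neg_div_neg_eq]; ring_nf
      rw [geom_sum_eq (ne_of_lt hx1), heq, inv_eq_one_div]
      gcongr
      nlinarith [pow_nonneg hx0.le (M+1)]
    calc (A.card : ℝ) * x ^ M ≤ _ := step1
      _ ≤ _ := step2
      _ = _ := step3
      _ ≤ ((1-x)⁻¹) ^ n := pow_le_pow_left₀ (by positivity) step4 n
  have hxMpos : (0:ℝ) < x ^ M := by positivity
  have final : (A.card : ℝ) ≤ ((1-x)⁻¹)^n * (x⁻¹)^M := by
    have h := (le_div_iff₀ hxMpos).mpr key
    calc (A.card : ℝ) ≤ ((1-x)⁻¹)^n / x^M := h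
      _ = ((1-x)⁻¹)^n * (x⁻¹)^M := by rw [div_eq_mul_inv]; ring
  have e1 : (1-x)⁻¹ = ((M:ℝ)+n)/n := by rw [h1mx, inv_div]
  have e2 : x⁻¹ = ((M:ℝ)+n)/M := by rw [hxdef, inv_div]
  rw [e1, e2] at final
  exact final.trans (mul_le_mul_of_nonneg_left (ratio_pow_le_exp n M hM) (by positivity))

set_option maxHeartbeats 1000000 in
theorem covering_slab_l1 :
    ∃ C : ℝ, 0 < C ∧
      ∀ c₁ c₂ : ℝ, 0 < c₁ → c₁ ≤ c₂ →
      ∀ ε : ℝ, 0 < ε → ε < 1 / 2 →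
      ∀ n : ℕ,
        ∃ T : Finset (Fin n → ℝ),
          (∀ P ∈ T, ∀ i, 0 ≤ P i) ∧
          (T.card : ℝ) ≤ C ^ n * ε ^ (-(n + 1 : ℤ)) * (1 + Real.log (c₂ / c₁)) ∧
          ∀ x : Fin n → ℝ, (∀ i, 0 ≤ x i) →
            c₁ ≤ ∑ i, x i → (∑ i, x i) < c₂ →
            ∃ P ∈ T, (∑ i, |x i - P i|) ≤ ε * ∑ i, |P i| := by
  classical
  refine ⟨20, by norm_num, ?_⟩
  intro c₁ c₂ hc₁ hc ε hε hε2 n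
  have hc₂ : 0 < c₂ := lt_of_lt_of_le hc₁ hc
  have hr1 : (1:ℝ) ≤ c₂ / c₁ := (one_le_div hc₁).mpr hc
  have hL : 0 ≤ Real.log (c₂ / c₁) := Real.log_nonneg hr1
  have h1L : (0:ℝ) ≤ 1 + Real.log (c₂ / c₁) := by linarith
  have hεinv : (2:ℝ) ≤ ε⁻¹ := by
    rw [(one_div ε).symm, le_div_iff₀ hε]; linarith
  match n with
  | 0 =>
      refine ⟨∅, by simp, ?_, ?_⟩
      · have : (0:ℝ) < (20:ℝ) ^ (0:ℕ) * ε ^ (-(0 + 1 : ℤ)) := by positivity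
        simp only [Finset.card_empty, Nat.cast_zero]
        exact mul_nonneg this.le h1L
      · intro x hx hx1 hx2
        exfalso
        have : ∑ i : Fin 0, x i = 0 := by simp
        linarith
  | (m+1) =>
    set n := m + 1 with hn
    have hn0 : 0 < n := Nat.succ_pos m
    have hn' : (0:ℝ) < n := by exact_mod_cast hn0
    have hn1 : (1:ℝ) ≤ n := by exact_mod_cast hn0
    set L := Real.log (c₂ / c₁) with hLdef
    set K := ⌊Real.logb 2 (c₂ / c₁)⌋₊ + 1 with hK
    set M := ⌈4 * (n:ℝ) / ε⌉₊ with hM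
    have hM0 : 0 < M := Nat.ceil_pos.mpr (by positivity)
    have hM' : (0:ℝ) < M := by exact_mod_cast hM0
    set A := (Fintype.piFinset fun _ : Fin n => Finset.range (M+1)).filter
        (fun q => ∑ i, q i ≤ M) with hAdef
    set δ : ℕ → ℝ := fun k => ε * (c₁ * 2^k) / (2*(n:ℝ)) with hδdef
    have hδ0 : ∀ k, 0 < δ k := fun k => by rw [hδdef]; positivity
    refine ⟨(Finset.range K).biUnion
      (fun k => A.image (fun q => fun i => δ k * (q i : ℝ))), ?_, ?_, ?_⟩
    · -- nonnegativity
      intro P hP i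
      obtain ⟨k, -, hPk⟩ := Finset.mem_biUnion.mp hP
      obtain ⟨q, -, rfl⟩ := Finset.mem_image.mp hPk
      exact mul_nonneg (hδ0 k).le (Nat.cast_nonneg _)
    · -- cardinality
      set L := Real.log (c₂ / c₁) with hLdef
      have hTK : ((Finset.range K).biUnion
          (fun k => A.image (fun q => fun i => δ k * (q i : ℝ)))).card ≤ K * A.card := by
        refine (Finset.card_biUnion_le).trans ?_
        calc ∑ k ∈ Finset.range K, (A.image (fun q => fun i => δ k * (q i : ℝ))).card
            ≤ ∑ _k ∈ Finset.range K, A.card :=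
              Finset.sum_le_sum (fun k _ => Finset.card_image_le)
          _ = K * A.card := by rw [Finset.sum_const, Finset.card_range, smul_eq_mul]
      have hA1 : (A.card:ℝ) ≤ (((M:ℝ) + n) / n) ^ n * Real.exp n :=
        card_simplex_le n M hn0 hM0
      have hA2 : ((M:ℝ)+n)/n ≤ 7/ε := by
        have hMa : (M:ℝ) < 4 * (n:ℝ)/ε + 1 := Nat.ceil_lt_add_one (by positivity)
        rw [div_le_div_iff₀ hn' hε]
        have h1 : (M:ℝ)*ε < 4*n + ε := by
          have h2 := mul_lt_mul_of_pos_right hMa hε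
          calc (M:ℝ)*ε < (4*(n:ℝ)/ε + 1)*ε := h2
            _ = 4*n + ε := by field_simp
        nlinarith [h1, hn1, hε.le, hε2]
      have hexp : Real.exp (n:ℝ) = Real.exp 1 ^ n := by
        rw [← Real.exp_nat_mul, mul_one]
      have hA3 : (A.card:ℝ) ≤ ((7*Real.exp 1)/ε) ^ n := by
        calc (A.card:ℝ) ≤ (((M:ℝ) + n) / n) ^ n * Real.exp n := hA1
          _ ≤ (7/ε)^n * Real.exp 1 ^ n := by
              rw [hexp]
              exact mul_le_mul_of_nonneg_right
                (pow_le_pow_left₀ (by positivity) hA2 n) (by positivity)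
          _ = ((7*Real.exp 1)/ε) ^ n := by rw [← mul_pow]; congr 1; ring
      have hKle : (K:ℝ) ≤ 2*(1+L) := by
        have hfl : ((⌊Real.logb 2 (c₂/c₁)⌋₊ : ℝ)) ≤ Real.logb 2 (c₂/c₁) :=
          Nat.floor_le (Real.logb_nonneg one_lt_two hr1)
        have hlogb : Real.logb 2 (c₂/c₁) ≤ 2 * L := by
          rw [Real.logb, div_le_iff₀ (Real.log_pos one_lt_two)]
          nlinarith [Real.log_two_gt_d9, hL]
        have hKcast : (K:ℝ) = (⌊Real.logb 2 (c₂/c₁)⌋₊ : ℝ) + 1 := by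
          rw [hK]; push_cast; ring
        rw [hKcast]; linarith
      have hB20 : 7*Real.exp 1 ≤ 20 := by nlinarith [Real.exp_one_lt_d9]
      have hzp : ε ^ (-(n + 1 : ℤ)) = (ε ^ (n+1))⁻¹ := by
        rw [zpow_neg, ← zpow_natCast ε (n+1)]; norm_num
      calc (((Finset.range K).biUnion
            (fun k => A.image (fun q => fun i => δ k * (q i : ℝ)))).card : ℝ)
          ≤ (K:ℝ) * (A.card:ℝ) := by exact_mod_cast hTK
        _ ≤ (2*(1+L)) * ((7*Real.exp 1)/ε)^n :=
            mul_le_mul hKle hA3 (Nat.cast_nonneg _) (by linarith)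
        _ ≤ (ε⁻¹*(1+L)) * ((20:ℝ)/ε)^n := by gcongr
        _ = 20^n * ε^(-(n + 1 : ℤ)) * (1+L) := by
            rw [hzp, div_pow]
            field_simp
            ring
    · -- covering
      intro x hx hxc₁ hxc₂
      set s := ∑ i, x i with hs
      have hs0 : 0 < s := lt_of_lt_of_le hc₁ hxc₁
      have hsr : (1:ℝ) ≤ s / c₁ := (one_le_div hc₁).mpr hxc₁
      set k := ⌊Real.logb 2 (s / c₁)⌋₊ with hk
      set t := c₁ * 2^k with ht
      have ht0 : 0 < t := by positivity
      have h2k_le : (2:ℝ)^(k:ℕ) ≤ s / c₁ := by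
        have h1 : ((k:ℝ)) ≤ Real.logb 2 (s/c₁) :=
          Nat.floor_le (Real.logb_nonneg one_lt_two hsr)
        calc (2:ℝ)^(k:ℕ) = (2:ℝ)^((k:ℕ):ℝ) := (Real.rpow_natCast 2 k).symm
          _ ≤ (2:ℝ)^(Real.logb 2 (s/c₁)) :=
              Real.rpow_le_rpow_of_exponent_le one_le_two h1
          _ = s/c₁ := Real.rpow_logb (by norm_num) (by norm_num) (by positivity)
      have hts : t ≤ s := by
        rw [ht, mul_comm]; exact (le_div_iff₀ hc₁).mp h2k_le
      have hs2t : s < 2*t := by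
        have h2 : Real.logb 2 (s/c₁) < (k:ℝ) + 1 := Nat.lt_floor_add_one _
        have h3 : s/c₁ < (2:ℝ)^(((k:ℕ):ℝ)+1) := by
          calc s/c₁ = (2:ℝ)^(Real.logb 2 (s/c₁)) :=
                (Real.rpow_logb (by norm_num) (by norm_num) (by positivity)).symm
            _ < (2:ℝ)^(((k:ℕ):ℝ)+1) := Real.rpow_lt_rpow_of_exponent_lt one_lt_two h2
        have h4 : (2:ℝ)^(((k:ℕ):ℝ)+1) = 2*(2:ℝ)^(k:ℕ) := by
          rw [Real.rpow_add (by norm_num), Real.rpow_one, Real.rpow_natCast]; ring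
        rw [h4] at h3
        have h5 := (div_lt_iff₀ hc₁).mp h3
        rw [ht]; nlinarith [h5]
      have hkK : k < K := by
        have hdiv : s/c₁ ≤ c₂/c₁ := by gcongr
        have hmono : Real.logb 2 (s/c₁) ≤ Real.logb 2 (c₂/c₁) :=
          Real.logb_le_logb_of_le one_lt_two (by positivity) hdiv
        have := Nat.floor_le_floor hmono
        omega
      have hδ0' : 0 < δ k := hδ0 k
      have hδt : 2*t/(δ k) = 4*(n:ℝ)/ε := by
        rw [hδdef, ht]
        field_simp
        ring
      set q : Fin n → ℕ := fun i => ⌊x i / δ k⌋₊ with hq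
      have hxiq : ∀ i, (q i : ℝ) ≤ x i / δ k := fun i => Nat.floor_le (div_nonneg (hx i) (hδ0 k).le)
      have hxis : ∀ i, x i ≤ s := fun i =>
        Finset.single_le_sum (fun j _ => hx j) (Finset.mem_univ i)
      have hMε : 4*(n:ℝ)/ε ≤ M := Nat.le_ceil _
      have hsδM : s / δ k ≤ (M:ℝ) := by
        calc s / δ k ≤ 2*t/δ k := by gcongr
          _ = 4*(n:ℝ)/ε := hδt
          _ ≤ M := hMε
      have hqiM : ∀ i, q i ≤ M := by
        intro i
        have hxM : x i / δ k ≤ (M:ℝ) := by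
          refine le_trans ?_ hsδM
          gcongr
          exact hxis i
        have := Nat.floor_le_floor hxM
        simpa using this
      have hqA : q ∈ A := by
        rw [hAdef, Finset.mem_filter]
        refine ⟨?_, ?_⟩
        · rw [Fintype.mem_piFinset]
          intro i
          exact Finset.mem_range.mpr (Nat.lt_succ_of_le (hqiM i))
        · have hsum : ((∑ i, q i : ℕ) : ℝ) ≤ (M:ℝ) := by
            push_cast
            calc ∑ i, (q i:ℝ) ≤ ∑ i, x i / δ k := Finset.sum_le_sum (fun i _ => hxiq i)
              _ = s / δ k := by rw [← Finset.sum_div]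
              _ ≤ M := hsδM
          exact_mod_cast hsum
      refine ⟨fun i => δ k * (q i : ℝ), ?_, ?_⟩
      · exact Finset.mem_biUnion.mpr
          ⟨k, Finset.mem_range.mpr hkK, Finset.mem_image.mpr ⟨q, hqA, rfl⟩⟩
      · have hPle : ∀ i, δ k * (q i:ℝ) ≤ x i := by
          intro i
          have h := (le_div_iff₀ hδ0').mp (hxiq i)
          linarith [h]
        have hPge : ∀ i, x i - δ k * (q i:ℝ) ≤ δ k := by
          intro i
          have h := Nat.lt_floor_add_one (x i / δ k)
          have h' : x i < ((q i:ℝ) + 1) * δ k := by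
            rw [← div_lt_iff₀ hδ0']
            exact_mod_cast h
          nlinarith [h']
        have hsum1 : ∑ i, |x i - δ k * (q i:ℝ)| ≤ (n:ℝ) * δ k := by
          calc ∑ i, |x i - δ k * (q i:ℝ)| = ∑ i, (x i - δ k * (q i:ℝ)) :=
                Finset.sum_congr rfl (fun i _ => abs_of_nonneg (by linarith [hPle i]))
            _ ≤ ∑ _i : Fin n, δ k := Finset.sum_le_sum (fun i _ => hPge i)
            _ = (n:ℝ) * δ k := by
                rw [Finset.sum_const, Finset.card_univ, Fintype.card_fin, nsmul_eq_mul]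
        have hsumP : ∑ i, |δ k * (q i:ℝ)| = ∑ i, δ k * (q i:ℝ) :=
          Finset.sum_congr rfl (fun i _ => abs_of_nonneg (by positivity))
        have hsplit : s - ∑ i, δ k * (q i:ℝ) = ∑ i, (x i - δ k * (q i:ℝ)) := by
          rw [Finset.sum_sub_distrib]
        have hsum2 : ∑ i, (x i - δ k * (q i:ℝ)) ≤ (n:ℝ) * δ k := by
          calc ∑ i, (x i - δ k * (q i:ℝ)) ≤ ∑ _i : Fin n, δ k :=
                Finset.sum_le_sum (fun i _ => hPge i)
            _ = (n:ℝ) * δ k := by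
                rw [Finset.sum_const, Finset.card_univ, Fintype.card_fin, nsmul_eq_mul]
        have hsumP2 : s - (n:ℝ) * δ k ≤ ∑ i, δ k * (q i:ℝ) := by linarith [hsplit ▸ hsum2]
        have hnδ : (n:ℝ) * δ k = ε * t / 2 := by
          rw [hδdef, ht]; field_simp
        simp only []
        rw [hsumP]
        have hPsum : t - ε*t/2 ≤ ∑ i, δ k * (q i:ℝ) := by
          rw [← hnδ]; linarith [hsumP2, hts, hnδ]
        have hLHS : ∑ i, |x i - δ k * (q i:ℝ)| ≤ ε*t/2 := by rw [← hnδ]; exact hsum1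
        linarith [hLHS, mul_le_mul_of_nonneg_left hPsum hε.le,
          mul_nonneg (mul_nonneg hε.le ht0.le) (show (0:ℝ) ≤ 1-ε by linarith)]
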